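/- Let X be a tree, x, x' vertices, k ≤ n, and z ∈ S_x^k a vertex not on the geodesic [x,x']. Then setting k' = d(x',z) and n' = n − k + k', one has I_z^{n,k,x} = I_z^{n',k',x'}. -/
import Mathlib

/-- The class `I_z^{n,k,x}` (with `k = d(x,z)`): points `a` at distance `n` from
`x` such that `z` lies on a geodesic from `x` to `a`. -/
def SimpleGraph.Icl {V : Type*} (G : SimpleGraph V) (x : V) (n : ℕ) (z : V) : Set V :=
  {a | G.dist x a = n ∧ G.dist x z + G.dist z a = G.dist x a}

namespace SimpleGraph

variable {V : Type*} {G : SimpleGraph V}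

/-- In a tree, `z` lies on the (unique) path from `u` to `v` iff the distances add up. -/
lemma IsTree.mem_support_iff (hT : G.IsTree) {u v z : V} (p : G.Walk u v) (hp : p.IsPath) :
    z ∈ p.support ↔ G.dist u z + G.dist z v = G.dist u v := by
  classical
  have hlen : p.length = G.dist u v := by
    obtain ⟨q, hq, hql⟩ := hT.isConnected.exists_path_of_dist u v
    rw [(hT.existsUnique_path u v).unique hp hq, hql]
  constructor
  · intro hmem
    have hsplit := p.take_spec hmem
    have h1 : G.dist u z ≤ (p.takeUntil z hmem).length := SimpleGraph.dist_le _
    have h2 : G.dist z v ≤ (p.dropUntil z hmem).length := SimpleGraph.dist_le _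
    have h3 : (p.takeUntil z hmem).length + (p.dropUntil z hmem).length = p.length := by
      rw [← Walk.length_append, hsplit]
    have h4 := hT.isConnected.dist_triangle (u := u) (v := z) (w := v)
    omega
  · intro hdist
    obtain ⟨p1, hp1, hl1⟩ := hT.isConnected.exists_path_of_dist u z
    obtain ⟨p2, hp2, hl2⟩ := hT.isConnected.exists_path_of_dist z v
    have hw : (p1.append p2).length = G.dist u v := by
      rw [Walk.length_append, hl1, hl2, hdist]
    have hwp : (p1.append p2).IsPath := Walk.isPath_of_length_eq_dist _ hw
    have := (hT.existsUnique_path u v).unique hp hwp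
    rw [this, Walk.mem_support_append_iff]
    exact Or.inl p1.end_mem_support

/-- Key lemma: in a tree, if `z ∉ [x,x']` and `z ∈ [x,a]` then `z ∈ [x',a]`. -/
lemma IsTree.key (hT : G.IsTree) {x x' z a : V}
    (hnot : ¬ (G.dist x z + G.dist z x' = G.dist x x'))
    (h : G.dist x z + G.dist z a = G.dist x a) :
    G.dist x' z + G.dist z a = G.dist x' a := by
  classical
  obtain ⟨p, hp, _⟩ := hT.isConnected.exists_path_of_dist x a
  obtain ⟨q, hq, _⟩ := hT.isConnected.exists_path_of_dist x x'
  obtain ⟨r, hr, _⟩ := hT.isConnected.exists_path_of_dist x' a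
  have hzp : z ∈ p.support := (hT.mem_support_iff p hp).2 h
  -- the unique path x→a is contained in the walk q.append r
  have hbp : (q.append r).bypass.IsPath := Walk.bypass_isPath _
  have heq : p = (q.append r).bypass := (hT.existsUnique_path x a).unique hp hbp
  have hsub : z ∈ (q.append r).support := by
    apply Walk.support_bypass_subset
    rw [← heq]; exact hzp
  rw [Walk.mem_support_append_iff] at hsub
  rcases hsub with hzq | hzr
  · exact absurd ((hT.mem_support_iff q hq).1 hzq) hnot
  · exact (hT.mem_support_iff r hr).1 hzr

end SimpleGraph

/-- In a tree, if `z ∈ S_x^k` is not on the geodesic `[x,x']`, then with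
`k' = d(x',z)` and `n' = n - k + k'` one has `I_z^{n,k,x} = I_z^{n',k',x'}`. -/
theorem class_away_from_geodesic {V : Type*} (G : SimpleGraph V) (hT : G.IsTree)
    (x x' z : V) (n k : ℕ) (hk : k ≤ n) (hz : G.dist x z = k)
    (hnot : ¬ (G.dist x z + G.dist z x' = G.dist x x')) :
    G.Icl x n z = G.Icl x' (n - k + G.dist x' z) z := by
  have hnot' : ¬ (G.dist x' z + G.dist z x = G.dist x' x) := by
    have c1 : G.dist x' z = G.dist z x' := SimpleGraph.dist_comm
    have c2 : G.dist z x = G.dist x z := SimpleGraph.dist_comm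
    have c3 : G.dist x' x = G.dist x x' := SimpleGraph.dist_comm
    omega
  ext a
  simp only [SimpleGraph.Icl, Set.mem_setOf_eq]
  constructor
  · rintro ⟨ha, hmem⟩
    have hkey := hT.key hnot hmem
    constructor <;> omega
  · rintro ⟨ha, hmem⟩
    have hkey := hT.key hnot' hmem
    constructor <;> omega
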